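/- For r ≥ 2, the optimal success probability for minimum-error discrimination satisfies the upper bound P^opt ≤ min_j { q_j + ∑ᵢ ‖(qᵢρᵢ − q_jρ_j)⁺‖₁ }, which equals ½ + ½·min_j { ∑ᵢ ‖qᵢρᵢ − q_jρ_j‖₁ − q_j(r−2) }. -/

import Mathlib

open scoped ComplexOrder

/-- The operator absolute value `√(AᴴA)` of a matrix. -/
noncomputable def matAbs {n : ℕ} (A : Matrix (Fin n) (Fin n) ℂ) : Matrix (Fin n) (Fin n) ℂ :=
  (Matrix.posSemidef_conjTranspose_mul_self A).1.eigenvectorUnitary.1 *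
    Matrix.diagonal ((↑) ∘ (√·) ∘ (Matrix.posSemidef_conjTranspose_mul_self A).1.eigenvalues) *
    (star (Matrix.posSemidef_conjTranspose_mul_self A).1.eigenvectorUnitary : Matrix (Fin n) (Fin n) ℂ)

/-- The trace norm `‖A‖₁ = tr √(AᴴA)`. -/
noncomputable def traceNorm {n : ℕ} (A : Matrix (Fin n) (Fin n) ℂ) : ℝ :=
  ((matAbs A).trace).re

/-- The positive part `A⁺ = (|A| + A)/2` of a self-adjoint matrix `A`, so that
`A = A⁺ - A⁻` with `A⁺, A⁻ ≥ 0`. -/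
noncomputable def matPosPart {n : ℕ} (A : Matrix (Fin n) (Fin n) ℂ) : Matrix (Fin n) (Fin n) ℂ :=
  (2 : ℂ)⁻¹ • (matAbs A + A)

/-- A density operator: positive semidefinite with unit trace. -/
def IsDensity {n : ℕ} (ρ : Matrix (Fin n) (Fin n) ℂ) : Prop :=
  ρ.PosSemidef ∧ ρ.trace = 1

/-- A POVM with `r` outcomes: positive semidefinite effects summing to the identity. -/
def IsPOVM {n r : ℕ} (M : Fin r → Matrix (Fin n) (Fin n) ℂ) : Prop :=
  (∀ i, (M i).PosSemidef) ∧ ∑ i, M i = 1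

/-- Success probability `∑ i, q i * tr (ρ i * M i)` of a measurement. -/
noncomputable def successProb {n r : ℕ} (q : Fin r → ℝ)
    (ρ M : Fin r → Matrix (Fin n) (Fin n) ℂ) : ℝ :=
  ∑ i, q i * ((ρ i * M i).trace).re

/-- Optimal success probability under minimum-error discrimination. -/
noncomputable def optSuccess {n r : ℕ} (q : Fin r → ℝ)
    (ρ : Fin r → Matrix (Fin n) (Fin n) ℂ) : ℝ :=
  sSup {p | ∃ M, IsPOVM M ∧ p = successProb q ρ M}

open Matrix

section SqrtHelpers
open scoped MatrixOrder

noncomputable def Matrix.PosSemidef.sqrt {n : ℕ} {A : Matrix (Fin n) (Fin n) ℂ}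
    (hA : A.PosSemidef) : Matrix (Fin n) (Fin n) ℂ :=
  hA.1.eigenvectorUnitary.1 * Matrix.diagonal ((↑) ∘ (√·) ∘ hA.1.eigenvalues) *
    (star hA.1.eigenvectorUnitary : Matrix (Fin n) (Fin n) ℂ)

lemma Matrix.PosSemidef.sqrt_eq_cfc {n : ℕ} {A : Matrix (Fin n) (Fin n) ℂ}
    (hA : A.PosSemidef) : hA.sqrt = CFC.sqrt A := by
  rw [CFC.sqrt_eq_real_sqrt A (Matrix.nonneg_iff_posSemidef.mpr hA),
    cfcₙ_eq_cfc (hf := Real.continuous_sqrt.continuousOn) (hf0 := Real.sqrt_zero), hA.1.cfc_eq,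
    Matrix.IsHermitian.cfc, Unitary.conjStarAlgAut_apply]
  rfl

lemma Matrix.PosSemidef.eq_sqrt_of_sq_eq {n : ℕ} {A B : Matrix (Fin n) (Fin n) ℂ}
    (hA : A.PosSemidef) (hB : B.PosSemidef) (h : A ^ 2 = B) : A = hB.sqrt := by
  rw [hB.sqrt_eq_cfc]
  exact (CFC.sqrt_unique (by rw [← sq]; exact h) (Matrix.nonneg_iff_posSemidef.mpr hA)).symm

lemma Matrix.PosSemidef.sqrt_mul_self {n : ℕ} {A : Matrix (Fin n) (Fin n) ℂ}
    (hA : A.PosSemidef) : hA.sqrt * hA.sqrt = A := by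
  rw [hA.sqrt_eq_cfc]
  exact CFC.sqrt_mul_sqrt_self A (Matrix.nonneg_iff_posSemidef.mpr hA)

lemma Matrix.PosSemidef.posSemidef_sqrt {n : ℕ} {A : Matrix (Fin n) (Fin n) ℂ}
    (hA : A.PosSemidef) : hA.sqrt.PosSemidef := by
  rw [hA.sqrt_eq_cfc]
  exact Matrix.nonneg_iff_posSemidef.mp (CFC.sqrt_nonneg A)

end SqrtHelpers

section Helpers
variable {n r : ℕ}

lemma unit_conj_mul {n : ℕ} (U : Matrix (Fin n) (Fin n) ℂ) (hU : star U * U = 1)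
    (E F : Matrix (Fin n) (Fin n) ℂ) :
    (U * E * star U) * (U * F * star U) = U * (E * F) * star U := by
  have hc : ∀ X : Matrix (Fin n) (Fin n) ℂ, star U * (U * X) = X := fun X => by
    rw [← mul_assoc, hU, one_mul]
  simp only [mul_assoc, hc]

lemma diagonal_ofReal_mul {n : ℕ} (f g : Fin n → ℝ) :
    diagonal (Complex.ofReal ∘ f) * diagonal (Complex.ofReal ∘ g)
      = diagonal (Complex.ofReal ∘ fun i => f i * g i) := by
  have h : (fun i => (Complex.ofReal ∘ f) i * (Complex.ofReal ∘ g) i)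
      = Complex.ofReal ∘ fun i => f i * g i := by
    funext i; simp [Function.comp]
  rw [diagonal_mul_diagonal, h]

lemma matAbs_herm {n : ℕ} {A : Matrix (Fin n) (Fin n) ℂ} (hA : A.IsHermitian) :
    matAbs A = (hA.eigenvectorUnitary : Matrix (Fin n) (Fin n) ℂ) *
      diagonal (Complex.ofReal ∘ fun i => |hA.eigenvalues i|) *
      star (hA.eigenvectorUnitary : Matrix (Fin n) (Fin n) ℂ) := by
  set U : Matrix (Fin n) (Fin n) ℂ := (hA.eigenvectorUnitary : Matrix (Fin n) (Fin n) ℂ)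
  have hU : star U * U = 1 := Matrix.mem_unitaryGroup_iff'.mp hA.eigenvectorUnitary.2
  have hB : (U * diagonal (Complex.ofReal ∘ fun i => |hA.eigenvalues i|) * star U).PosSemidef := by
    rw [Matrix.star_eq_conjTranspose]
    refine Matrix.PosSemidef.mul_mul_conjTranspose_same
      (Matrix.posSemidef_diagonal_iff.mpr fun i => ?_) U
    simpa using Complex.zero_le_real.mpr (abs_nonneg (hA.eigenvalues i))
  have hsq : (U * diagonal (Complex.ofReal ∘ fun i => |hA.eigenvalues i|) * star U) ^ 2
      = Aᴴ * A := by
    rw [sq, unit_conj_mul U hU, diagonal_ofReal_mul, show Aᴴ = A from hA]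
    conv_rhs => rw [hA.spectral_theorem]
    rw [Unitary.conjStarAlgAut_apply, show (RCLike.ofReal : ℝ → ℂ) = Complex.ofReal from rfl,
      unit_conj_mul U hU, diagonal_ofReal_mul]
    have habs : (fun i => |hA.eigenvalues i| * |hA.eigenvalues i|)
        = fun i => hA.eigenvalues i * hA.eigenvalues i := by
      funext i; exact abs_mul_abs_self _
    rw [habs]
  exact (hB.eq_sqrt_of_sq_eq (Matrix.posSemidef_conjTranspose_mul_self A) hsq).symm


lemma conj_diag_posSemidef {n : ℕ} (U : Matrix (Fin n) (Fin n) ℂ) {f : Fin n → ℝ}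
    (hf : ∀ i, 0 ≤ f i) :
    (U * diagonal (Complex.ofReal ∘ f) * star U).PosSemidef := by
  rw [Matrix.star_eq_conjTranspose]
  refine Matrix.PosSemidef.mul_mul_conjTranspose_same
    (Matrix.posSemidef_diagonal_iff.mpr fun i => ?_) U
  simpa using Complex.zero_le_real.mpr (hf i)

lemma conj_smul_diag {n : ℕ} (U : Matrix (Fin n) (Fin n) ℂ) (c : ℂ) (d : Fin n → ℂ) :
    c • (U * diagonal d * star U) = U * diagonal (fun i => c * d i) * star U := by
  rw [← Matrix.smul_mul, ← Matrix.mul_smul, ← diagonal_smul]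
  rfl

lemma matPosPart_herm {n : ℕ} {A : Matrix (Fin n) (Fin n) ℂ} (hA : A.IsHermitian) :
    matPosPart A = (hA.eigenvectorUnitary : Matrix (Fin n) (Fin n) ℂ) *
      diagonal (Complex.ofReal ∘ fun i => (|hA.eigenvalues i| + hA.eigenvalues i) / 2) *
      star (hA.eigenvectorUnitary : Matrix (Fin n) (Fin n) ℂ) := by
  set U : Matrix (Fin n) (Fin n) ℂ := (hA.eigenvectorUnitary : Matrix (Fin n) (Fin n) ℂ)
  have hsp : A = U * diagonal (Complex.ofReal ∘ hA.eigenvalues) * star U := hA.spectral_theorem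
  rw [matPosPart, matAbs_herm hA]
  have h2 := congrArg (fun X : Matrix (Fin n) (Fin n) ℂ =>
    (2 : ℂ)⁻¹ • (U * diagonal (Complex.ofReal ∘ fun i => |hA.eigenvalues i|) * star U + X)) hsp
  rw [h2, ← Matrix.add_mul, ← Matrix.mul_add, diagonal_add, conj_smul_diag]
  have h3 : (fun i => (2:ℂ)⁻¹ * ((Complex.ofReal ∘ fun i => |hA.eigenvalues i|) i
      + (Complex.ofReal ∘ hA.eigenvalues) i))
      = Complex.ofReal ∘ fun i => (|hA.eigenvalues i| + hA.eigenvalues i) / 2 := by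
    funext i
    simp only [Function.comp_apply]
    push_cast
    ring
  rw [h3]

lemma matPosPart_posSemidef {n : ℕ} {A : Matrix (Fin n) (Fin n) ℂ} (hA : A.IsHermitian) :
    (matPosPart A).PosSemidef := by
  rw [matPosPart_herm hA]
  exact conj_diag_posSemidef _ fun i => by
    have := neg_abs_le (hA.eigenvalues i); linarith

lemma matPosPart_sub_posSemidef {n : ℕ} {A : Matrix (Fin n) (Fin n) ℂ} (hA : A.IsHermitian) :
    (matPosPart A - A).PosSemidef := by
  set U : Matrix (Fin n) (Fin n) ℂ := (hA.eigenvectorUnitary : Matrix (Fin n) (Fin n) ℂ)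
  have hsp : A = U * diagonal (Complex.ofReal ∘ hA.eigenvalues) * star U := hA.spectral_theorem
  rw [matPosPart_herm hA]
  have h2 := congrArg (fun X : Matrix (Fin n) (Fin n) ℂ =>
    U * diagonal (Complex.ofReal ∘ fun i => (|hA.eigenvalues i| + hA.eigenvalues i) / 2) * star U
      - X) hsp
  rw [h2, ← Matrix.sub_mul, ← Matrix.mul_sub, diagonal_sub]
  have h : (fun i => (Complex.ofReal ∘ fun i => (|hA.eigenvalues i| + hA.eigenvalues i) / 2) i
      - (Complex.ofReal ∘ hA.eigenvalues) i)
      = Complex.ofReal ∘ fun i => (|hA.eigenvalues i| - hA.eigenvalues i) / 2 := by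
    funext i
    simp only [Function.comp_apply]
    push_cast
    ring
  rw [h]
  exact conj_diag_posSemidef _ fun i => by
    have := le_abs_self (hA.eigenvalues i); linarith

lemma matAbs_of_posSemidef {n : ℕ} {B : Matrix (Fin n) (Fin n) ℂ} (hB : B.PosSemidef) :
    matAbs B = B :=
  (hB.eq_sqrt_of_sq_eq (Matrix.posSemidef_conjTranspose_mul_self B) (by rw [sq, hB.1])).symm

lemma traceNorm_of_posSemidef {n : ℕ} {B : Matrix (Fin n) (Fin n) ℂ} (hB : B.PosSemidef) :
    traceNorm B = B.trace.re := by
  rw [traceNorm, matAbs_of_posSemidef hB]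

lemma trace_re_nonneg {n : ℕ} {B : Matrix (Fin n) (Fin n) ℂ} (hB : B.PosSemidef) :
    0 ≤ B.trace.re := by
  rw [Matrix.trace, Complex.re_sum]
  refine Finset.sum_nonneg fun i _ => ?_
  have h := hB.re_dotProduct_nonneg (Pi.single i 1)
  simpa [Matrix.mulVec_single, dotProduct, Pi.single_apply, Matrix.diag] using h

lemma trace_mul_re_nonneg {n : ℕ} {P Q : Matrix (Fin n) (Fin n) ℂ}
    (hP : P.PosSemidef) (hQ : Q.PosSemidef) : 0 ≤ (P * Q).trace.re := by
  have h1 : P * Q = hP.sqrt * (hP.sqrt * Q) := by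
    rw [← mul_assoc, hP.sqrt_mul_self]
  have h2 : (P * Q).trace = (hP.sqrt * Q * hP.sqrt).trace := by
    rw [h1, Matrix.trace_mul_comm, mul_assoc]
  have h3 : (hP.sqrt * Q * hP.sqrt).PosSemidef := by
    have := hQ.mul_mul_conjTranspose_same hP.sqrt
    rwa [hP.posSemidef_sqrt.1] at this
  rw [h2]
  exact trace_re_nonneg h3

lemma posSemidef_sum {n : ℕ} {ι : Type*} (s : Finset ι) (f : ι → Matrix (Fin n) (Fin n) ℂ)
    (h : ∀ k ∈ s, (f k).PosSemidef) : (∑ k ∈ s, f k).PosSemidef :=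
  Finset.sum_induction f _ (fun _ _ ha hb => ha.add hb) Matrix.PosSemidef.zero h

lemma herm_smul_sub {A B : Matrix (Fin n) (Fin n) ℂ} (hA : A.IsHermitian) (hB : B.IsHermitian)
    (a b : ℝ) : ((a : ℂ) • A - (b : ℂ) • B).IsHermitian := by
  show _ᴴ = _
  rw [Matrix.conjTranspose_sub, Matrix.conjTranspose_smul, Matrix.conjTranspose_smul,
    hA.eq, hB.eq]
  simp [Complex.conj_ofReal]

lemma trace_re_smul_sub {A B : Matrix (Fin n) (Fin n) ℂ} (hA : A.trace = 1) (hB : B.trace = 1)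
    (a b : ℝ) : ((a : ℂ) • A - (b : ℂ) • B).trace.re = a - b := by
  rw [Matrix.trace_sub, Matrix.trace_smul, Matrix.trace_smul, hA, hB]
  simp

lemma one_sub_povm_psd {M : Fin r → Matrix (Fin n) (Fin n) ℂ} (hM : IsPOVM M) (i : Fin r) :
    ((1 : Matrix (Fin n) (Fin n) ℂ) - M i).PosSemidef := by
  have h : (1 : Matrix (Fin n) (Fin n) ℂ) - M i = ∑ k ∈ Finset.univ.erase i, M k := by
    rw [← hM.2, sub_eq_iff_eq_add, Finset.sum_erase_add _ _ (Finset.mem_univ i)]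
  rw [h]
  exact posSemidef_sum _ _ fun k _ => hM.1 k

lemma succ_bound {ρ M : Fin r → Matrix (Fin n) (Fin n) ℂ} {q : Fin r → ℝ}
    (hρ : ∀ i, IsDensity (ρ i)) (hM : IsPOVM M) (j : Fin r) :
    successProb q ρ M ≤
      q j + ∑ i, traceNorm (matPosPart ((q i : ℂ) • ρ i - (q j : ℂ) • ρ j)) := by
  set A : Fin r → Matrix (Fin n) (Fin n) ℂ :=
    fun i => (q i : ℂ) • ρ i - (q j : ℂ) • ρ j with hA
  have hherm : ∀ i, (A i).IsHermitian :=
    fun i => herm_smul_sub (hρ i).1.1 (hρ j).1.1 _ _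
  have hsucc : successProb q ρ M = (∑ i, ((A i) * M i).trace.re) + q j := by
    unfold successProb
    have key : ∀ i ∈ Finset.univ, q i * ((ρ i * M i).trace).re
        = ((A i) * M i).trace.re + q j * ((ρ j * M i).trace).re := by
      intro i _
      have hAM : (A i) * M i = (q i : ℂ) • (ρ i * M i) - (q j : ℂ) • (ρ j * M i) := by
        rw [hA, Matrix.sub_mul, Matrix.smul_mul, Matrix.smul_mul]
      rw [hAM, Matrix.trace_sub, Matrix.trace_smul, Matrix.trace_smul]
      simp only [smul_eq_mul, Complex.sub_re, Complex.re_ofReal_mul]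
      ring
    rw [Finset.sum_congr rfl key, Finset.sum_add_distrib]
    congr 1
    have : ∑ i, q j * ((ρ j * M i).trace).re = q j * ((ρ j * ∑ i, M i).trace).re := by
      rw [Matrix.mul_sum, Matrix.trace_sum, Complex.re_sum, Finset.mul_sum]
    rw [this, hM.2, mul_one, (hρ j).2]
    simp
  rw [hsucc, add_comm]
  refine add_le_add_right (Finset.sum_le_sum fun i _ => ?_) (q j)
  have e1 : ((A i) * M i).trace.re ≤ ((matPosPart (A i)) * M i).trace.re := by
    have h := trace_mul_re_nonneg (matPosPart_sub_posSemidef (hherm i)) (hM.1 i)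
    rw [Matrix.sub_mul, Matrix.trace_sub, Complex.sub_re] at h
    linarith
  have e2 : ((matPosPart (A i)) * M i).trace.re ≤ (matPosPart (A i)).trace.re := by
    have h := trace_mul_re_nonneg (matPosPart_posSemidef (hherm i)) (one_sub_povm_psd hM i)
    rw [Matrix.mul_sub, mul_one, Matrix.trace_sub, Complex.sub_re] at h
    linarith
  rw [traceNorm_of_posSemidef (matPosPart_posSemidef (hherm i))]
  linarith

lemma fj_identity {n r : ℕ} (ρ : Fin r → Matrix (Fin n) (Fin n) ℂ) (q : Fin r → ℝ)
    (hρ : ∀ i, IsDensity (ρ i)) (hq1 : ∑ i, q i = 1) (j : Fin r) :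
    q j + ∑ i, traceNorm (matPosPart ((q i : ℂ) • ρ i - (q j : ℂ) • ρ j))
      = 1 / 2 + (1 / 2) *
          ((∑ i, traceNorm ((q i : ℂ) • ρ i - (q j : ℂ) • ρ j)) - q j * ((r : ℝ) - 2)) := by
  have hherm : ∀ i, ((q i : ℂ) • ρ i - (q j : ℂ) • ρ j).IsHermitian :=
    fun i => herm_smul_sub (hρ i).1.1 (hρ j).1.1 _ _
  have hTpos : ∀ i ∈ Finset.univ, traceNorm (matPosPart ((q i : ℂ) • ρ i - (q j : ℂ) • ρ j))
      = traceNorm ((q i : ℂ) • ρ i - (q j : ℂ) • ρ j) / 2 + q i / 2 - q j / 2 := by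
    intro i _
    rw [traceNorm_of_posSemidef (matPosPart_posSemidef (hherm i))]
    simp only [matPosPart]
    rw [Matrix.trace_smul, smul_eq_mul, show ((2 : ℂ)⁻¹) = ((2⁻¹ : ℝ) : ℂ) from by norm_num,
      Complex.re_ofReal_mul, Matrix.trace_add, Complex.add_re]
    have ht : ((q i : ℂ) • ρ i - (q j : ℂ) • ρ j).trace.re = q i - q j :=
      trace_re_smul_sub (hρ i).2 (hρ j).2 _ _
    rw [ht]
    simp only [traceNorm]
    ring
  rw [Finset.sum_congr rfl hTpos, Finset.sum_sub_distrib, Finset.sum_add_distrib,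
    ← Finset.sum_div, ← Finset.sum_div, hq1, Finset.sum_const, Finset.card_univ,
    Fintype.card_fin, nsmul_eq_mul]
  push_cast
  ring

end Helpers

theorem stmt8 {n r : ℕ} (hr : 2 ≤ r) (ρ : Fin r → Matrix (Fin n) (Fin n) ℂ)
    (q : Fin r → ℝ) (hρ : ∀ i, IsDensity (ρ i)) (hq : ∀ i, 0 < q i)
    (hq1 : ∑ i, q i = 1) :
    optSuccess q ρ ≤
      Finset.univ.inf' (Finset.univ_nonempty_iff.mpr ⟨⟨0, by omega⟩⟩)
        (fun j => q j + ∑ i, traceNorm (matPosPart ((q i : ℂ) • ρ i - (q j : ℂ) • ρ j))) ∧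
    Finset.univ.inf' (Finset.univ_nonempty_iff.mpr ⟨⟨0, by omega⟩⟩)
        (fun j => q j + ∑ i, traceNorm (matPosPart ((q i : ℂ) • ρ i - (q j : ℂ) • ρ j)))
      = 1 / 2 + (1 / 2) *
          Finset.univ.inf' (Finset.univ_nonempty_iff.mpr ⟨⟨0, by omega⟩⟩)
            (fun j => (∑ i, traceNorm ((q i : ℂ) • ρ i - (q j : ℂ) • ρ j)) - q j * ((r : ℝ) - 2)) := by
  have hne : (Finset.univ : Finset (Fin r)).Nonempty :=
    Finset.univ_nonempty_iff.mpr ⟨⟨0, by omega⟩⟩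
  set f : Fin r → ℝ :=
    fun j => q j + ∑ i, traceNorm (matPosPart ((q i : ℂ) • ρ i - (q j : ℂ) • ρ j)) with hf
  set g : Fin r → ℝ :=
    fun j => (∑ i, traceNorm ((q i : ℂ) • ρ i - (q j : ℂ) • ρ j)) - q j * ((r : ℝ) - 2) with hg
  have hfg : ∀ j, f j = 1 / 2 + (1 / 2) * g j := fun j => fj_identity ρ q hρ hq1 j
  constructor
  · refine Real.sSup_le ?_ ?_
    · rintro p ⟨M, hM, rfl⟩
      exact Finset.le_inf' _ _ fun j _ => succ_bound hρ hM j
    · obtain ⟨j, -, hj⟩ := Finset.exists_mem_eq_inf' hne f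
      rw [hj, hf]
      have h1 : 0 ≤ ∑ i, traceNorm (matPosPart ((q i : ℂ) • ρ i - (q j : ℂ) • ρ j)) := by
        refine Finset.sum_nonneg fun i _ => ?_
        have hpsd := matPosPart_posSemidef (herm_smul_sub (hρ i).1.1 (hρ j).1.1 (q i) (q j))
        rw [traceNorm_of_posSemidef hpsd]
        exact trace_re_nonneg hpsd
      have := (hq j).le
      simp only
      linarith
  · apply le_antisymm
    · obtain ⟨j, -, hj⟩ := Finset.exists_mem_eq_inf' hne g
      calc Finset.univ.inf' hne f ≤ f j := Finset.inf'_le _ (Finset.mem_univ j)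
        _ = 1 / 2 + (1 / 2) * g j := hfg j
        _ = _ := by rw [← hj]
    · refine Finset.le_inf' _ _ fun j _ => ?_
      rw [hfg j]
      refine add_le_add_right ?_ _
      refine mul_le_mul_of_nonneg_left ?_ (by norm_num)
      exact Finset.inf'_le _ (Finset.mem_univ j)
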